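/- Let {H^{(k)}}_{k≥0} be Laurent series of the form H^{(k)} = z^k + Σ_{l≥1} H^k_l z^{-l} whose span H₊ satisfies the invariance condition (∂/∂t_j + H^{(j)})(H₊) ⊆ H₊ for all j. Then the currents satisfy the Central System: ∂H^{(k)}/∂t_j + H^{(j)}H^{(k)} = H^{(j+k)} + Σ_{l=1}^{k} H^j_l H^{(k-l)} + Σ_{l=1}^{j} H^k_l H^{(j-l)}. -/

import Mathlib

/- Formal Laurent series in `z⁻¹` are modelled as Hahn series in `ζ = z⁻¹`:
the coefficient of `z^m` is the coefficient at index `-m`; in particular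
`H^k_l = (H k).coeff l` is the coefficient of `z^{-l}`.  The coefficient ring
`R` consists of functions of the times, with derivations `dT j = ∂/∂t_j`
acting coefficientwise on Laurent series. -/

variable {R : Type*} [CommRing R]

/-- Coefficientwise action of a derivation on Laurent series. -/
noncomputable def liftD (d : R →+ R) (f : HahnSeries ℤ R) : HahnSeries ℤ R where
  coeff n := d (f.coeff n)
  isPWO_support' := f.isPWO_support'.mono (by
    intro n hn
    simp only [Function.mem_support] at hn ⊢
    intro h0
    exact hn (by rw [h0, map_zero]))

/-- if the currents `H⁽ᵏ⁾ = z^k + Σ_{l≥1} H^k_l z^{-l}` are such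
that their span `H₊` satisfies `(∂/∂t_j + H⁽ʲ⁾)(H₊) ⊆ H₊` for all `j`, then
they satisfy the Central System
`∂H⁽ᵏ⁾/∂t_j + H⁽ʲ⁾H⁽ᵏ⁾ = H⁽ʲ⁺ᵏ⁾ + Σ_{l=1}^k H^j_l H⁽ᵏ⁻ˡ⁾ + Σ_{l=1}^j H^k_l H⁽ʲ⁻ˡ⁾`. -/
theorem central_system_from_invariance (dT : ℕ → R →+ R)
    (hdT : ∀ j, ∀ a b : R, dT j (a * b) = dT j a * b + a * dT j b)
    (H : ℕ → HahnSeries ℤ R)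
    (hHshape : ∀ k, (H k).coeff (-(k : ℤ)) = 1 ∧
      (∀ n : ℤ, n < -(k : ℤ) → (H k).coeff n = 0) ∧
      (∀ n : ℤ, -(k : ℤ) < n → n ≤ 0 → (H k).coeff n = 0))
    (hinv : ∀ j, ∀ f ∈ Submodule.span R (Set.range H),
      liftD (dT j) f + H j * f ∈ Submodule.span R (Set.range H)) :
    ∀ j k, liftD (dT j) (H k) + H j * H k
        = H (j + k)
          + ∑ l ∈ Finset.Icc 1 k, ((H j).coeff (l : ℤ)) • H (k - l)
          + ∑ l ∈ Finset.Icc 1 j, ((H k).coeff (l : ℤ)) • H (j - l) := by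
  -- coefficient of H i at nonpositive indices
  have hcoeff : ∀ (i : ℕ) (n : ℤ), n ≤ 0 → (H i).coeff n = if n = -(i : ℤ) then 1 else 0 := by
    intro i n hn
    obtain ⟨h1, h2, h3⟩ := hHshape i
    rcases lt_trichotomy n (-(i : ℤ)) with h | h | h
    · rw [if_neg (by omega), h2 n h]
    · rw [if_pos h, h, h1]
    · rw [if_neg (by omega), h3 n h hn]
  -- coefficient extraction commutes with finite sums
  have hcoeff_sum : ∀ (s : Finset ℕ) (f : ℕ → HahnSeries ℤ R) (n : ℤ),
      (∑ l ∈ s, f l).coeff n = ∑ l ∈ s, (f l).coeff n := by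
    intro s f n
    have := map_sum (HahnSeries.coeff.addMonoidHom n) f s
    simpa only [HahnSeries.coeff.addMonoidHom, AddMonoidHom.coe_mk, ZeroHom.coe_mk] using this
  -- an element of the span whose nonpositive coefficients vanish is zero
  have key : ∀ f ∈ Submodule.span R (Set.range H),
      (∀ n : ℤ, n ≤ 0 → f.coeff n = 0) → f = 0 := by
    intro f hf hc
    rw [Finsupp.mem_span_range_iff_exists_finsupp] at hf
    obtain ⟨c, hcf⟩ := hf
    have hc0 : c = 0 := by
      ext m
      have h0 := hc (-(m : ℤ)) (by omega)
      rw [← hcf] at h0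
      have hmap := map_finsuppSum (HahnSeries.coeff.addMonoidHom (-(m : ℤ))) c
        (fun i a => a • H i)
      simp only [HahnSeries.coeff.addMonoidHom, AddMonoidHom.coe_mk, ZeroHom.coe_mk] at hmap
      rw [hmap] at h0
      have hco : (c.sum fun i a => (a • H i).coeff (-(m : ℤ)))
          = c.sum fun i a => if i = m then a else 0 := by
        apply Finsupp.sum_congr
        intro i _
        rw [HahnSeries.coeff_smul, hcoeff i _ (by omega), smul_eq_mul]
        by_cases h : i = m
        · simp [h]
        · rw [if_neg (by omega), if_neg h, mul_zero]
      rw [hco, Finsupp.sum_ite_eq' c m (fun _ a => a)] at h0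
      by_cases hm : m ∈ c.support
      · rwa [if_pos hm] at h0
      · simpa using hm
    rw [← hcf, hc0, Finsupp.sum_zero_index]
  -- the "positive part" of H i
  set P : ℕ → HahnSeries ℤ R := fun i => H i - HahnSeries.single (-(i : ℤ)) 1 with hP
  have hPco : ∀ (i : ℕ) (n : ℤ), (P i).coeff n
      = (H i).coeff n - (if n = -(i : ℤ) then 1 else 0) := by
    intro i n
    rw [hP]
    simp [HahnSeries.coeff_sub, HahnSeries.coeff_single]
  have hPnonpos : ∀ (i : ℕ) (n : ℤ), n ≤ 0 → (P i).coeff n = 0 := by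
    intro i n hn
    rw [hPco, hcoeff i n hn, sub_self]
  have hPpos : ∀ (i : ℕ) (n : ℤ), 1 ≤ n → (P i).coeff n = (H i).coeff n := by
    intro i n hn
    rw [hPco, if_neg (by omega), sub_zero]
  -- product coefficient at nonpositive indices
  have hmulco : ∀ (j k : ℕ) (m : ℕ), (H j * H k).coeff (-(m : ℤ))
      = (if (m : ℤ) = (j : ℤ) + k then 1 else 0)
        + (P k).coeff ((j : ℤ) - m) + (P j).coeff ((k : ℤ) - m) := by
    intro j k m
    have hss : (HahnSeries.single (-(j : ℤ)) (1 : R)) * HahnSeries.single (-(k : ℤ)) 1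
        = HahnSeries.single ((-(j : ℤ)) + (-(k : ℤ))) 1 := by
      rw [HahnSeries.single_mul_single, one_mul]
    have hsplit : H j * H k
        = HahnSeries.single ((-(j : ℤ)) + (-(k : ℤ))) 1
          + HahnSeries.single (-(j : ℤ)) 1 * P k
          + P j * HahnSeries.single (-(k : ℤ)) 1
          + P j * P k := by
      rw [← hss, hP]
      ring
    rw [hsplit]
    simp only [HahnSeries.coeff_add]
    have h1 : (HahnSeries.single ((-(j : ℤ)) + (-(k : ℤ))) (1 : R)).coeff (-(m : ℤ))
        = if (m : ℤ) = (j : ℤ) + k then 1 else 0 := by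
      rw [HahnSeries.coeff_single]
      by_cases h : (m : ℤ) = (j : ℤ) + k
      · rw [if_pos (by omega), if_pos h]
      · rw [if_neg (by omega), if_neg h]
    have h2 : (HahnSeries.single (-(j : ℤ)) (1 : R) * P k).coeff (-(m : ℤ))
        = (P k).coeff ((j : ℤ) - m) := by
      rw [show (-(m : ℤ)) = ((j : ℤ) - m) + (-(j : ℤ)) by ring,
        HahnSeries.coeff_single_mul_add, one_mul]
    have h3 : (P j * HahnSeries.single (-(k : ℤ)) (1 : R)).coeff (-(m : ℤ))
        = (P j).coeff ((k : ℤ) - m) := by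
      rw [show (-(m : ℤ)) = ((k : ℤ) - m) + (-(k : ℤ)) by ring,
        HahnSeries.coeff_mul_single_add, mul_one]
    have h4 : (P j * P k).coeff (-(m : ℤ)) = 0 := by
      by_contra h
      have hmem : (-(m : ℤ)) ∈ (P j * P k).support := h
      obtain ⟨a, ha, b, hb, hab⟩ := HahnSeries.support_mul_subset hmem
      have ha1 : 1 ≤ a := by
        by_contra h'
        exact ha (hPnonpos j a (by omega))
      have hb1 : 1 ≤ b := by
        by_contra h'
        exact hb (hPnonpos k b (by omega))
      simp only [Set.mem_add] at hab
      omega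
    rw [h1, h2, h3, h4, add_zero]
  -- coefficient of the correction sums
  have hsumco : ∀ (j k : ℕ) (m : ℕ),
      (∑ l ∈ Finset.Icc 1 k, ((H j).coeff (l : ℤ)) • H (k - l)).coeff (-(m : ℤ))
        = (P j).coeff ((k : ℤ) - m) := by
    intro j k m
    rw [hcoeff_sum]
    by_cases hmk : m < k
    · rw [Finset.sum_eq_single_of_mem (k - m)
        (by rw [Finset.mem_Icc]; omega)
        (by
          intro b hb hne
          rw [Finset.mem_Icc] at hb
          rw [HahnSeries.coeff_smul, hcoeff (k - b) _ (by omega), smul_eq_mul,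
            if_neg (by omega), mul_zero])]
      rw [HahnSeries.coeff_smul, hcoeff (k - (k - m)) _ (by omega), smul_eq_mul,
        if_pos (by omega), mul_one, hPpos j _ (by omega)]
      congr 1
      omega
    · rw [Finset.sum_eq_zero, hPnonpos j _ (by omega)]
      intro l hl
      rw [Finset.mem_Icc] at hl
      rw [HahnSeries.coeff_smul, hcoeff (k - l) _ (by omega), smul_eq_mul,
        if_neg (by omega), mul_zero]
  -- derivative of constants vanishes
  have hd1 : ∀ j, dT j (1 : R) = 0 := by
    intro j
    have h := hdT j 1 1
    simp only [mul_one, one_mul] at h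
    nth_rewrite 1 [← add_zero (dT j 1)] at h
    exact (add_left_cancel h).symm
  -- main argument
  intro j k
  set Rhs := H (j + k)
      + ∑ l ∈ Finset.Icc 1 k, ((H j).coeff (l : ℤ)) • H (k - l)
      + ∑ l ∈ Finset.Icc 1 j, ((H k).coeff (l : ℤ)) • H (j - l) with hRhs
  have hLmem : liftD (dT j) (H k) + H j * H k ∈ Submodule.span R (Set.range H) :=
    hinv j (H k) (Submodule.subset_span ⟨k, rfl⟩)
  have hRmem : Rhs ∈ Submodule.span R (Set.range H) := by
    refine add_mem (add_mem (Submodule.subset_span ⟨j + k, rfl⟩) ?_) ?_ <;>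
      exact Submodule.sum_mem _ fun l _ =>
        Submodule.smul_mem _ _ (Submodule.subset_span ⟨_, rfl⟩)
  have hzero : liftD (dT j) (H k) + H j * H k - Rhs = 0 := by
    apply key _ (sub_mem hLmem hRmem)
    intro n hn
    obtain ⟨m, rfl⟩ : ∃ m : ℕ, n = -(m : ℤ) := ⟨(-n).toNat, by omega⟩
    rw [HahnSeries.coeff_sub, sub_eq_zero]
    have hL : (liftD (dT j) (H k) + H j * H k).coeff (-(m : ℤ))
        = (if (m : ℤ) = (j : ℤ) + k then 1 else 0)
          + (P k).coeff ((j : ℤ) - m) + (P j).coeff ((k : ℤ) - m) := by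
      rw [HahnSeries.coeff_add, hmulco j k m]
      have hlift : (liftD (dT j) (H k)).coeff (-(m : ℤ)) = 0 := by
        show dT j ((H k).coeff (-(m : ℤ))) = 0
        rw [hcoeff k _ (by omega)]
        by_cases h : (-(m : ℤ)) = -(k : ℤ)
        · rw [if_pos h, hd1]
        · rw [if_neg h, map_zero]
      rw [hlift, zero_add]
    have hR : Rhs.coeff (-(m : ℤ))
        = (if (m : ℤ) = (j : ℤ) + k then 1 else 0)
          + (P j).coeff ((k : ℤ) - m) + (P k).coeff ((j : ℤ) - m) := by
      rw [hRhs]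
      simp only [HahnSeries.coeff_add]
      rw [hsumco j k m, hsumco k j m, hcoeff (j + k) _ (by omega)]
      congr 1
      by_cases h : (m : ℤ) = (j : ℤ) + k
      · rw [if_pos (by push_cast; omega), if_pos h]
      · rw [if_neg (by push_cast; omega), if_neg h]
    rw [hL, hR]
    ring
  have := sub_eq_zero.mp hzero
  exact this
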